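/- (Fractional smoothing property of B_2) Let s and α be real numbers with s + α ≥ 0, α < 3/4, and s > −3/4. Then for every t ∈ ℝ the bilinear operator B_2 maps Ḣ^s × Ḣ^s into Ḣ^{s+α} and satisfies ‖B_2(φ,ψ)‖_{Ḣ^{s+α}} ≤ C(s,α) ‖φ‖_{Ḣ^s} ‖ψ‖_{Ḣ^s}, with a constant C(s,α) independent of t. -/

import Mathlib

open MeasureTheory Set

noncomputable section

/-- The weight `|k|^(2s)` appearing in the `Ḣ^s` norm. -/
def wt (s : ℝ) (k : ℤ) : ℝ := ((|k| : ℤ) : ℝ) ^ (2 * s)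

/-- Membership in the homogeneous Sobolev space `Ḣ^s` of sequences indexed by
nonzero integers. -/
def memH (s : ℝ) (u : ℤ → ℂ) : Prop :=
  Summable (fun k : {k : ℤ // k ≠ 0} => wt s k.1 * ‖u k.1‖ ^ 2)

/-- The `Ḣ^s` norm. -/
def hnorm (s : ℝ) (u : ℤ → ℂ) : ℝ :=
  Real.sqrt (∑' k : {k : ℤ // k ≠ 0}, wt s k.1 * ‖u k.1‖ ^ 2)

/-- The `(Ḣ^s)²` norm of a pair. -/
def hnorm2 (s : ℝ) (u v : ℤ → ℂ) : ℝ :=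
  Real.sqrt (hnorm s u ^ 2 + hnorm s v ^ 2)

/-- The conserved energy functional `𝓔(u,v) = 2‖u‖² + 2‖v‖² + ‖u-v‖²` (in `Ḣ^0`). -/
def energyE (u v : ℤ → ℂ) : ℝ :=
  2 * hnorm 0 u ^ 2 + 2 * hnorm 0 v ^ 2 + hnorm 0 (fun k => u k - v k) ^ 2

/-- Projection `𝒫` onto the low Fourier modes `|k| ≤ N`. -/
def Plow (N : ℕ) (u : ℤ → ℂ) : ℤ → ℂ := fun k => if |k| ≤ (N : ℤ) then u k else 0

/-- Projection `𝒬 = I - 𝒫` onto the high Fourier modes `|k| > N`. -/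
def Qhigh (N : ℕ) (u : ℤ → ℂ) : ℤ → ℂ := fun k => if |k| ≤ (N : ℤ) then 0 else u k

/-- The oscillating factor `e^{3 i k k₁ k₂ t}` with `k₂ = k - k₁`. -/
def osc2 (t : ℝ) (k k1 : ℤ) : ℂ :=
  Complex.exp (3 * Complex.I * (k : ℂ) * (k1 : ℂ) * ((k - k1 : ℤ) : ℂ) * (t : ℂ))

/-- The oscillating factor `e^{3 i (k₁+k₂)(k₂+k₃)(k₁+k₃) t}`. -/
def osc3 (t : ℝ) (k1 k2 k3 : ℤ) : ℂ :=
  Complex.exp (3 * Complex.I * ((k1 + k2 : ℤ) : ℂ) * ((k2 + k3 : ℤ) : ℂ) *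
    ((k1 + k3 : ℤ) : ℂ) * (t : ℂ))

/-- The bilinear operator `B₁` at time `t`. -/
def B1 (t : ℝ) (φ ψ : ℤ → ℂ) : ℤ → ℂ := fun k =>
  Complex.I * (k : ℂ) / 2 *
    ∑' k1 : ℤ, if k1 ≠ 0 ∧ k - k1 ≠ 0 then osc2 t k k1 * φ k1 * ψ (k - k1) else 0

/-- The bilinear operator `B₂` at time `t`. -/
def B2 (t : ℝ) (φ ψ : ℤ → ℂ) : ℤ → ℂ := fun k =>
  (1 / 6 : ℂ) *
    ∑' k1 : ℤ, if k1 ≠ 0 ∧ k - k1 ≠ 0 then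
      osc2 t k k1 * φ k1 * ψ (k - k1) / ((k1 : ℂ) * ((k - k1 : ℤ) : ℂ)) else 0

/-- The trilinear operator `R₃` at time `t`. -/
def R3 (t : ℝ) (φ ψ ξ : ℤ → ℂ) : ℤ → ℂ := fun k =>
  ∑' p : ℤ × ℤ,
    if p.1 ≠ 0 ∧ p.2 ≠ 0 ∧ k - p.1 - p.2 ≠ 0 then
      osc3 t p.1 p.2 (k - p.1 - p.2) * φ p.1 * ψ p.2 * ξ (k - p.1 - p.2) / (p.1 : ℂ)
    else 0

/-- The resonant part `R₃res` (sum over `(k₁+k₂)(k₂+k₃)(k₁+k₃) = 0`). -/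
def R3res (φ ψ ξ : ℤ → ℂ) : ℤ → ℂ := fun k =>
  ∑' p : ℤ × ℤ,
    if p.1 ≠ 0 ∧ p.2 ≠ 0 ∧ k - p.1 - p.2 ≠ 0 ∧
        (p.1 + p.2) * (p.2 + (k - p.1 - p.2)) * (p.1 + (k - p.1 - p.2)) = 0 then
      φ p.1 * ψ p.2 * ξ (k - p.1 - p.2) / (p.1 : ℂ)
    else 0

/-- The nonresonant part `R₃nres` (sum over `(k₁+k₂)(k₂+k₃)(k₁+k₃) ≠ 0`). -/
def R3nres (t : ℝ) (φ ψ ξ : ℤ → ℂ) : ℤ → ℂ := fun k =>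
  ∑' p : ℤ × ℤ,
    if p.1 ≠ 0 ∧ p.2 ≠ 0 ∧ k - p.1 - p.2 ≠ 0 ∧
        (p.1 + p.2) * (p.2 + (k - p.1 - p.2)) * (p.1 + (k - p.1 - p.2)) ≠ 0 then
      osc3 t p.1 p.2 (k - p.1 - p.2) * φ p.1 * ψ p.2 * ξ (k - p.1 - p.2) / (p.1 : ℂ)
    else 0

/-- The operator `R₃nres1(φ,ψ,ξ) = R₃nres(φ,𝒫ψ,ξ) + R₃nres(φ,𝒬ψ,𝒫ξ)`. -/
def R3nres1 (N : ℕ) (t : ℝ) (φ ψ ξ : ℤ → ℂ) : ℤ → ℂ := fun k =>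
  R3nres t φ (Plow N ψ) ξ k + R3nres t φ (Qhigh N ψ) (Plow N ξ) k

/-- The trilinear operator `B₃` (nonresonant indices). -/
def B3 (t : ℝ) (φ ψ ξ : ℤ → ℂ) : ℤ → ℂ := fun k =>
  ∑' p : ℤ × ℤ,
    if p.1 ≠ 0 ∧ p.2 ≠ 0 ∧ k - p.1 - p.2 ≠ 0 ∧
        (p.1 + p.2) * (p.2 + (k - p.1 - p.2)) * (p.1 + (k - p.1 - p.2)) ≠ 0 then
      osc3 t p.1 p.2 (k - p.1 - p.2) * φ p.1 * ψ p.2 * ξ (k - p.1 - p.2) /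
        ((p.1 : ℂ) * ((p.1 + p.2 : ℤ) : ℂ) * ((p.2 + (k - p.1 - p.2) : ℤ) : ℂ) *
          ((p.1 + (k - p.1 - p.2) : ℤ) : ℂ))
    else 0

/-- The operator `B₃₀(φ,ψ,ξ) = B₃(φ,𝒬ψ,𝒬ξ)`. -/
def B30 (N : ℕ) (t : ℝ) (φ ψ ξ : ℤ → ℂ) : ℤ → ℂ :=
  B3 t φ (Qhigh N ψ) (Qhigh N ξ)

/-- The phase `Φ(k₁,k₂,k₃,k₄) = (k₁+k₂+k₃+k₄)³ - k₁³ - k₂³ - k₃³ - k₄³`. -/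
def Phi4 (k1 k2 k3 k4 : ℤ) : ℤ :=
  (k1 + k2 + k3 + k4) ^ 3 - k1 ^ 3 - k2 ^ 3 - k3 ^ 3 - k4 ^ 3

/-- The oscillating factor `e^{i Φ(k₁,k₂,k₃,k₄) t}`. -/
def osc4 (t : ℝ) (k1 k2 k3 k4 : ℤ) : ℂ :=
  Complex.exp (Complex.I * ((Phi4 k1 k2 k3 k4 : ℤ) : ℂ) * (t : ℂ))

/-- The quadrilinear operator `B₄¹`. -/
def B41 (t : ℝ) (φ ψ ξ η : ℤ → ℂ) : ℤ → ℂ := fun k =>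
  ∑' q : ℤ × ℤ × ℤ,
    let k1 := q.1; let k2 := q.2.1; let k3 := q.2.2; let k4 := k - k1 - k2 - k3
    if k1 ≠ 0 ∧ k2 ≠ 0 ∧ k3 ≠ 0 ∧ k4 ≠ 0 ∧
        (k1 + k2) * (k1 + k3 + k4) * (k2 + k3 + k4) ≠ 0 then
      osc4 t k1 k2 k3 k4 * φ k1 * ψ k2 * ξ k3 * η k4 /
        (((k1 + k2 : ℤ) : ℂ) * ((k1 + k3 + k4 : ℤ) : ℂ) * ((k2 + k3 + k4 : ℤ) : ℂ))
    else 0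

/-- The quadrilinear operator `B₄²`. -/
def B42 (t : ℝ) (φ ψ ξ η : ℤ → ℂ) : ℤ → ℂ := fun k =>
  ∑' q : ℤ × ℤ × ℤ,
    let k1 := q.1; let k2 := q.2.1; let k3 := q.2.2; let k4 := k - k1 - k2 - k3
    if k1 ≠ 0 ∧ k2 ≠ 0 ∧ k3 ≠ 0 ∧ k4 ≠ 0 ∧
        (k1 + k2) * (k1 + k3 + k4) * (k2 + k3 + k4) ≠ 0 then
      osc4 t k1 k2 k3 k4 * ((k3 + k4 : ℤ) : ℂ) * φ k1 * ψ k2 * ξ k3 * η k4 /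
        ((k1 : ℂ) * ((k1 + k2 : ℤ) : ℂ) * ((k1 + k3 + k4 : ℤ) : ℂ) *
          ((k2 + k3 + k4 : ℤ) : ℂ))
    else 0

/-- The quadrilinear operator `B₄ = B₄¹ + B₄²`. -/
def B4 (t : ℝ) (φ ψ ξ η : ℤ → ℂ) : ℤ → ℂ := fun k =>
  B41 t φ ψ ξ η k + B42 t φ ψ ξ η k

/-- Right-hand side (before the `ik/2` factor and integration) of the `u`-equation
of the transformed Majda–Biello system. -/
def mbRHSu (u v : ℝ → ℤ → ℂ) (τ : ℝ) (k : ℤ) : ℂ :=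
  ∑' k1 : ℤ, if k1 ≠ 0 ∧ k - k1 ≠ 0 then
    osc2 τ k k1 * (u τ k1 * v τ (k - k1) - u τ k1 * u τ (k - k1)) else 0

/-- Right-hand side (before the `ik/2` factor and integration) of the `v`-equation
of the transformed Majda–Biello system. -/
def mbRHSv (u v : ℝ → ℤ → ℂ) (τ : ℝ) (k : ℤ) : ℂ :=
  ∑' k1 : ℤ, if k1 ≠ 0 ∧ k - k1 ≠ 0 then
    osc2 τ k k1 * (u τ k1 * v τ (k - k1) - v τ k1 * v τ (k - k1)) else 0

/-- `(u,v)` is a solution of the transformed Majda–Biello system on `[0,T]`: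
it belongs to `L^∞([0,T];(Ḣ^0)²)` and satisfies the integrated equations. -/
def IsMBSolution (T : ℝ) (u v : ℝ → ℤ → ℂ) : Prop :=
  (∃ M : ℝ, ∀ t ∈ Icc (0 : ℝ) T,
      memH 0 (u t) ∧ memH 0 (v t) ∧ hnorm2 0 (u t) (v t) ≤ M) ∧
  ∀ k : ℤ, k ≠ 0 → ∀ t ∈ Icc (0 : ℝ) T,
    (u t k - u 0 k = Complex.I * (k : ℂ) / 2 * (∫ τ in (0 : ℝ)..t, mbRHSu u v τ k)) ∧
    (v t k - v 0 k = Complex.I * (k : ℂ) / 2 * (∫ τ in (0 : ℝ)..t, mbRHSv u v τ k))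

/-- The (finite) right-hand side of the `u`-equation of the `N`-th Galerkin system. -/
def galRHSu (N : ℕ) (t : ℝ) (f g : ℤ → ℂ) (k : ℤ) : ℂ :=
  Complex.I * (k : ℂ) / 2 * ∑ k1 ∈ Finset.Icc (-(N : ℤ)) (N : ℤ),
    (if k1 ≠ 0 ∧ k - k1 ≠ 0 ∧ |k - k1| ≤ (N : ℤ) then
      osc2 t k k1 * (f k1 * g (k - k1) - f k1 * f (k - k1)) else 0)

/-- The (finite) right-hand side of the `v`-equation of the `N`-th Galerkin system. -/
def galRHSv (N : ℕ) (t : ℝ) (f g : ℤ → ℂ) (k : ℤ) : ℂ :=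
  Complex.I * (k : ℂ) / 2 * ∑ k1 ∈ Finset.Icc (-(N : ℤ)) (N : ℤ),
    (if k1 ≠ 0 ∧ k - k1 ≠ 0 ∧ |k - k1| ≤ (N : ℤ) then
      osc2 t k k1 * (f k1 * g (k - k1) - g k1 * g (k - k1)) else 0)

/-- `(u,v)` solves the `N`-th Galerkin system on the set `S` with initial data
`(uin, vin)`. -/
def IsGalerkinSolution (N : ℕ) (uin vin : ℤ → ℂ) (S : Set ℝ) (u v : ℝ → ℤ → ℂ) : Prop :=
  (∀ k : ℤ, k ≠ 0 → u 0 k = uin k ∧ v 0 k = vin k) ∧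
  ∀ t ∈ S, ∀ k : ℤ, k ≠ 0 →
    HasDerivWithinAt (fun τ : ℝ => u τ k)
      (if |k| ≤ (N : ℤ) then galRHSu N t (u t) (v t) k else 0) S t ∧
    HasDerivWithinAt (fun τ : ℝ => v τ k)
      (if |k| ≤ (N : ℤ) then galRHSv N t (u t) (v t) k else 0) S t

/-! ### Auxiliary lemmas for the proof of `b2_fractional_smoothing` -/

private lemma b2aux_abs_pos {k : ℤ} (hk : k ≠ 0) : (0:ℝ) < |(k:ℝ)| :=
  abs_pos.mpr (Int.cast_ne_zero.mpr hk)

private lemma b2aux_one_le_abs {k : ℤ} (hk : k ≠ 0) : (1:ℝ) ≤ |(k:ℝ)| := by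
  have := Int.one_le_abs hk
  calc (1:ℝ) ≤ ((|k| : ℤ) : ℝ) := by exact_mod_cast this
  _ = |(k:ℝ)| := by push_cast; ring

private lemma b2aux_rpow_sq {k : ℤ} (hk : k ≠ 0) (r : ℝ) :
    (|(k:ℝ)| ^ r) ^ 2 = |(k:ℝ)| ^ (2 * r) := by
  rw [sq, ← Real.rpow_add (b2aux_abs_pos hk), two_mul]

private lemma b2aux_wt_eq (r : ℝ) (k : ℤ) : wt r k = |(k:ℝ)| ^ (2 * r) := by
  rw [wt, Int.cast_abs]

/-- Cauchy–Schwarz inequality for `tsum` over nonnegative reals. -/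
private lemma b2aux_tsum_cs {f g : ℤ → ℝ} (hf0 : ∀ i, 0 ≤ f i) (hg0 : ∀ i, 0 ≤ g i)
    (hf : Summable fun i => f i ^ 2) (hg : Summable fun i => g i ^ 2) :
    (∑' i, f i * g i) ^ 2 ≤ (∑' i, f i ^ 2) * (∑' i, g i ^ 2) := by
  have hfg : Summable fun i => f i * g i := by
    refine Summable.of_nonneg_of_le (fun i => mul_nonneg (hf0 i) (hg0 i))
      (fun i => ?_) ((hf.add hg).div_const 2)
    nlinarith [sq_nonneg (f i - g i)]
  have hA : 0 ≤ ∑' i, f i ^ 2 := tsum_nonneg fun i => sq_nonneg _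
  have hB : 0 ≤ ∑' i, g i ^ 2 := tsum_nonneg fun i => sq_nonneg _
  have key : ∑' i, f i * g i ≤ Real.sqrt ((∑' i, f i ^ 2) * (∑' i, g i ^ 2)) := by
    refine Summable.tsum_le_of_sum_le hfg fun u => ?_
    have h1 : (∑ i ∈ u, f i * g i) ^ 2 ≤ (∑ i ∈ u, f i ^ 2) * ∑ i ∈ u, g i ^ 2 :=
      Finset.sum_mul_sq_le_sq_mul_sq u f g
    have h2 : (∑ i ∈ u, f i ^ 2) * ∑ i ∈ u, g i ^ 2 ≤ (∑' i, f i ^ 2) * (∑' i, g i ^ 2) :=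
      mul_le_mul (Summable.sum_le_tsum u (fun i _ => sq_nonneg _) hf)
        (Summable.sum_le_tsum u (fun i _ => sq_nonneg _) hg)
        (Finset.sum_nonneg fun i _ => sq_nonneg _) hA
    have h3 : 0 ≤ ∑ i ∈ u, f i * g i :=
      Finset.sum_nonneg fun i _ => mul_nonneg (hf0 i) (hg0 i)
    calc ∑ i ∈ u, f i * g i = Real.sqrt ((∑ i ∈ u, f i * g i) ^ 2) := (Real.sqrt_sq h3).symm
    _ ≤ _ := Real.sqrt_le_sqrt (h1.trans h2)
  have h4 : 0 ≤ ∑' i, f i * g i := tsum_nonneg fun i => mul_nonneg (hf0 i) (hg0 i)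
  calc (∑' i, f i * g i) ^ 2 ≤ Real.sqrt ((∑' i, f i ^ 2) * (∑' i, g i ^ 2)) ^ 2 :=
        pow_le_pow_left₀ h4 key 2
  _ = _ := Real.sq_sqrt (mul_nonneg hA hB)

private lemma b2aux_norm_osc2 (t : ℝ) (k k1 : ℤ) : ‖osc2 t k k1‖ = 1 := by
  have h : (3 * Complex.I * (k : ℂ) * (k1 : ℂ) * ((k - k1 : ℤ) : ℂ) * (t : ℂ))
      = ((3 * (k : ℝ) * (k1 : ℝ) * ((k : ℝ) - (k1 : ℝ)) * t : ℝ) : ℂ) * Complex.I := by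
    push_cast; ring
  rw [osc2, h, Complex.norm_exp_ofReal_mul_I]

private def b2aux_E : ℤ × ℤ ≃ ℤ × ℤ :=
  ⟨fun p => (p.2, p.1 - p.2), fun q => (q.1 + q.2, q.1),
    fun p => by simp, fun q => by simp⟩
set_option maxHeartbeats 2000000 in
/-- Fractional smoothing property of `B₂`. -/
theorem b2_fractional_smoothing (s α : ℝ) (h1 : 0 ≤ s + α) (h2 : α < 3 / 4)
    (h3 : -(3 / 4) < s) :
    ∃ C : ℝ, ∀ t : ℝ, ∀ φ ψ : ℤ → ℂ, memH s φ → memH s ψ →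
      memH (s + α) (B2 t φ ψ) ∧
      hnorm (s + α) (B2 t φ ψ) ≤ C * hnorm s φ * hnorm s ψ := by
  -- the basic `ℓ²` zeta-type constant
  have hZsum : Summable (fun n : ℤ => |(n:ℝ)| ^ (4*α - 4)) := by
    have hp : (1:ℝ) < -(4*α - 4) := by linarith
    simpa using Real.summable_abs_int_rpow hp
  set Z : ℝ := ∑' n : ℤ, |(n:ℝ)| ^ (4*α - 4) with hZdef
  have hZ0 : 0 ≤ Z := tsum_nonneg fun n => Real.rpow_nonneg (abs_nonneg _) _
  set Cs : ℝ := (2:ℝ) ^ (2*(s+α)) * Z with hCsdef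
  have hCs0 : 0 ≤ Cs := mul_nonneg (Real.rpow_nonneg (by norm_num) _) hZ0
  refine ⟨Real.sqrt Cs / 6, fun t φ ψ hφ hψ => ?_⟩
  classical
  -- the `ℓ²` profiles of `φ` and `ψ`
  set a : ℤ → ℝ := fun k => if k = 0 then 0 else |(k:ℝ)| ^ s * ‖φ k‖ with hadef
  set b : ℤ → ℝ := fun k => if k = 0 then 0 else |(k:ℝ)| ^ s * ‖ψ k‖ with hbdef
  have ha0 : ∀ k, 0 ≤ a k := by
    intro k; rw [hadef]; dsimp only
    split
    · exact le_refl 0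
    · exact mul_nonneg (Real.rpow_nonneg (abs_nonneg _) _) (norm_nonneg _)
  have hb0 : ∀ k, 0 ≤ b k := by
    intro k; rw [hbdef]; dsimp only
    split
    · exact le_refl 0
    · exact mul_nonneg (Real.rpow_nonneg (abs_nonneg _) _) (norm_nonneg _)
  have ha2 : ∀ k : ℤ, a k ^ 2 =
      Set.indicator {k : ℤ | k ≠ 0} (fun k => wt s k * ‖φ k‖ ^ 2) k := by
    intro k
    rw [Set.indicator_apply, hadef]
    by_cases hk : k = 0
    · simp [hk]
    · simp only [hk, if_neg, Set.mem_setOf_eq, ne_eq, not_false_eq_true, if_true, if_false]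
      rw [mul_pow, b2aux_rpow_sq hk, b2aux_wt_eq]
  have hb2 : ∀ k : ℤ, b k ^ 2 =
      Set.indicator {k : ℤ | k ≠ 0} (fun k => wt s k * ‖ψ k‖ ^ 2) k := by
    intro k
    rw [Set.indicator_apply, hbdef]
    by_cases hk : k = 0
    · simp [hk]
    · simp only [hk, if_neg, Set.mem_setOf_eq, ne_eq, not_false_eq_true, if_true, if_false]
      rw [mul_pow, b2aux_rpow_sq hk, b2aux_wt_eq]
  have haS : Summable (fun k : ℤ => a k ^ 2) := by
    have h2 : Summable (Set.indicator {k : ℤ | k ≠ 0} fun k => wt s k * ‖φ k‖ ^ 2) :=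
      summable_subtype_iff_indicator.mp hφ
    exact h2.congr fun k => (ha2 k).symm
  have hbS : Summable (fun k : ℤ => b k ^ 2) := by
    have h2 : Summable (Set.indicator {k : ℤ | k ≠ 0} fun k => wt s k * ‖ψ k‖ ^ 2) :=
      summable_subtype_iff_indicator.mp hψ
    exact h2.congr fun k => (hb2 k).symm
  have hwt0 : ∀ (r : ℝ) (k : ℤ), 0 ≤ wt r k := by
    intro r k; rw [wt]; positivity
  have htsa : ∑' k : ℤ, a k ^ 2 = hnorm s φ ^ 2 := by
    have hX : 0 ≤ ∑' k : {k : ℤ // k ≠ 0}, wt s k.1 * ‖φ k.1‖ ^ 2 :=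
      tsum_nonneg fun k => mul_nonneg (hwt0 s k.1) (sq_nonneg _)
    rw [hnorm, Real.sq_sqrt hX, tsum_congr ha2, ← tsum_subtype]
    rfl
  have htsb : ∑' k : ℤ, b k ^ 2 = hnorm s ψ ^ 2 := by
    have hX : 0 ≤ ∑' k : {k : ℤ // k ≠ 0}, wt s k.1 * ‖ψ k.1‖ ^ 2 :=
      tsum_nonneg fun k => mul_nonneg (hwt0 s k.1) (sq_nonneg _)
    rw [hnorm, Real.sq_sqrt hX, tsum_congr hb2, ← tsum_subtype]
    rfl
  -- the product sequence on `ℤ × ℤ` and its reindexing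
  have hP : Summable (fun p : ℤ × ℤ => a p.1 ^ 2 * b p.2 ^ 2) :=
    haS.mul_of_nonneg hbS (fun i => sq_nonneg _) (fun i => sq_nonneg _)
  have hPE : Summable (fun p : ℤ × ℤ => a p.2 ^ 2 * b (p.1 - p.2) ^ 2) :=
    (b2aux_E.summable_iff (f := fun p : ℤ × ℤ => a p.1 ^ 2 * b p.2 ^ 2)).mpr hP
  have hPE' := (summable_prod_of_nonneg
      (f := fun p : ℤ × ℤ => a p.2 ^ 2 * b (p.1 - p.2) ^ 2)
      (fun p => mul_nonneg (sq_nonneg _) (sq_nonneg _))).mp hPE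
  have hfiber : ∀ k : ℤ, Summable (fun k1 : ℤ => a k1 ^ 2 * b (k - k1) ^ 2) := hPE'.1
  have hDsum : Summable (fun k : ℤ => ∑' k1 : ℤ, a k1 ^ 2 * b (k - k1) ^ 2) := hPE'.2
  have htsD : ∑' k : ℤ, ∑' k1 : ℤ, a k1 ^ 2 * b (k - k1) ^ 2
      = (∑' k : ℤ, a k ^ 2) * (∑' k : ℤ, b k ^ 2) := by
    rw [← Summable.tsum_prod' hPE hPE.prod_factor]
    rw [show (∑' p : ℤ × ℤ, a p.2 ^ 2 * b (p.1 - p.2) ^ 2)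
        = ∑' p : ℤ × ℤ, a (b2aux_E p).1 ^ 2 * b (b2aux_E p).2 ^ 2 from rfl]
    rw [b2aux_E.tsum_eq (f := fun p : ℤ × ℤ => a p.1 ^ 2 * b p.2 ^ 2)]
    rw [Summable.tsum_prod' hP hP.prod_factor]
    calc ∑' k1 : ℤ, ∑' k2 : ℤ, a k1 ^ 2 * b k2 ^ 2
        = ∑' k1 : ℤ, a k1 ^ 2 * ∑' k2 : ℤ, b k2 ^ 2 := by
          exact tsum_congr fun k1 => tsum_mul_left
    _ = _ := tsum_mul_right
  -- the key pointwise estimate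
  have key : ∀ k : ℤ, k ≠ 0 →
      wt (s+α) k * ‖B2 t φ ψ k‖ ^ 2 ≤ Cs/36 * ∑' k1 : ℤ, a k1 ^ 2 * b (k - k1) ^ 2 := by
    intro k hk
    set f : ℤ → ℝ := fun k1 => if k1 ≠ 0 ∧ k - k1 ≠ 0 then
      |(k1:ℝ)| ^ (-(1+s)) * |((k - k1 : ℤ):ℝ)| ^ (-(1+s)) else 0 with hfdef
    set g : ℤ → ℝ := fun k1 => if k1 ≠ 0 ∧ k - k1 ≠ 0 then a k1 * b (k - k1) else 0 with hgdef
    have hf0 : ∀ k1, 0 ≤ f k1 := by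
      intro k1; rw [hfdef]; dsimp only; split
      · exact mul_nonneg (Real.rpow_nonneg (abs_nonneg _) _)
          (Real.rpow_nonneg (abs_nonneg _) _)
      · exact le_refl 0
    have hg0 : ∀ k1, 0 ≤ g k1 := by
      intro k1; rw [hgdef]; dsimp only; split
      · exact mul_nonneg (ha0 _) (hb0 _)
      · exact le_refl 0
    -- norm of the summand
    have hFnorm : ∀ k1 : ℤ,
        ‖(if k1 ≠ 0 ∧ k - k1 ≠ 0 then
          osc2 t k k1 * φ k1 * ψ (k - k1) / ((k1 : ℂ) * ((k - k1 : ℤ) : ℂ)) else 0)‖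
        = f k1 * g k1 := by
      intro k1
      by_cases h : k1 ≠ 0 ∧ k - k1 ≠ 0
      · obtain ⟨h1', h2'⟩ := h
        rw [if_pos ⟨h1', h2'⟩, hfdef, hgdef]
        dsimp only
        rw [if_pos ⟨h1', h2'⟩, if_pos ⟨h1', h2'⟩, hadef, hbdef]
        dsimp only
        rw [if_neg h1', if_neg h2']
        rw [norm_div, norm_mul, norm_mul, norm_mul, b2aux_norm_osc2, one_mul]
        have hn1 : ‖(k1 : ℂ)‖ = |(k1:ℝ)| := by
          rw [show ((k1:ℂ)) = (((k1:ℝ)):ℂ) by push_cast; ring, Complex.norm_real,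
            Real.norm_eq_abs]
        have hn2 : ‖((k - k1 : ℤ) : ℂ)‖ = |((k - k1 : ℤ):ℝ)| := by
          rw [show (((k - k1 : ℤ):ℂ)) = ((((k - k1 : ℤ):ℝ)):ℂ) by push_cast; ring,
            Complex.norm_real, Real.norm_eq_abs]
        rw [hn1, hn2]
        have e1 : |(k1:ℝ)| ^ (-(1+s)) * |(k1:ℝ)| ^ s = |(k1:ℝ)|⁻¹ := by
          rw [← Real.rpow_add (b2aux_abs_pos h1'), show -(1+s) + s = -1 by ring,
            Real.rpow_neg_one]
        have e2 : |((k - k1 : ℤ):ℝ)| ^ (-(1+s)) * |((k - k1 : ℤ):ℝ)| ^ s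
            = |((k - k1 : ℤ):ℝ)|⁻¹ := by
          rw [← Real.rpow_add (b2aux_abs_pos h2'), show -(1+s) + s = -1 by ring,
            Real.rpow_neg_one]
        rw [show |(k1:ℝ)| ^ (-(1+s)) * |((k - k1 : ℤ):ℝ)| ^ (-(1+s)) *
            (|(k1:ℝ)| ^ s * ‖φ k1‖ * (|((k - k1 : ℤ):ℝ)| ^ s * ‖ψ (k - k1)‖))
            = (|(k1:ℝ)| ^ (-(1+s)) * |(k1:ℝ)| ^ s) *
              ((|((k - k1 : ℤ):ℝ)| ^ (-(1+s)) * |((k - k1 : ℤ):ℝ)| ^ s) *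
              (‖φ k1‖ * ‖ψ (k - k1)‖)) from by ring, e1, e2]
        rw [div_eq_mul_inv, mul_inv]
        ring
      · rw [if_neg h, hfdef]
        dsimp only
        rw [if_neg h, norm_zero, zero_mul]
    -- the multiplier estimate
    have hf2 : ∀ k1 : ℤ, wt (s+α) k * f k1 ^ 2 ≤
        (2:ℝ) ^ (2*(s+α)) * ((|(k1:ℝ)| ^ (4*α-4) + |((k - k1 : ℤ):ℝ)| ^ (4*α-4)) / 2) := by
      intro k1
      by_cases h : k1 ≠ 0 ∧ k - k1 ≠ 0
      · obtain ⟨h1', h2'⟩ := h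
        rw [hfdef]; dsimp only; rw [if_pos ⟨h1', h2'⟩]
        set x := |(k1:ℝ)| with hx
        set y := |((k - k1 : ℤ):ℝ)| with hy
        have hx1 : (1:ℝ) ≤ x := b2aux_one_le_abs h1'
        have hy1 : (1:ℝ) ≤ y := b2aux_one_le_abs h2'
        have hx0 : (0:ℝ) < x := lt_of_lt_of_le one_pos hx1
        have hy0 : (0:ℝ) < y := lt_of_lt_of_le one_pos hy1
        -- `|k| ≤ 2 x y`
        have hk2 : |(k:ℝ)| ≤ 2 * x * y := by
          have : (k:ℝ) = (k1:ℝ) + ((k - k1 : ℤ):ℝ) := by push_cast; ring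
          calc |(k:ℝ)| ≤ |(k1:ℝ)| + |((k - k1 : ℤ):ℝ)| := by
                rw [this]; exact abs_add_le _ _
          _ = x + y := rfl
          _ ≤ 2 * x * y := by nlinarith
        have hwtk : wt (s+α) k ≤ (2:ℝ) ^ (2*(s+α)) * (x ^ (2*(s+α)) * y ^ (2*(s+α))) := by
          rw [b2aux_wt_eq]
          calc |(k:ℝ)| ^ (2*(s+α)) ≤ (2 * x * y) ^ (2*(s+α)) :=
            Real.rpow_le_rpow (abs_nonneg _) hk2 (by linarith)
          _ = (2:ℝ) ^ (2*(s+α)) * (x ^ (2*(s+α)) * y ^ (2*(s+α))) := by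
            rw [Real.mul_rpow (by positivity) hy0.le, Real.mul_rpow (by norm_num) hx0.le]
            ring
        have hfsq : (x ^ (-(1+s)) * y ^ (-(1+s))) ^ 2 = x ^ (-(2+2*s)) * y ^ (-(2+2*s)) := by
          rw [mul_pow, b2aux_rpow_sq h1', b2aux_rpow_sq h2']
          rw [show 2 * -(1+s) = -(2+2*s) by ring]
        have hcomb : x ^ (2*(s+α)) * x ^ (-(2+2*s)) = x ^ (2*α - 2) := by
          rw [← Real.rpow_add hx0]; ring_nf
        have hcomb' : y ^ (2*(s+α)) * y ^ (-(2+2*s)) = y ^ (2*α - 2) := by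
          rw [← Real.rpow_add hy0]; ring_nf
        have hamgm : x ^ (2*α - 2) * y ^ (2*α - 2)
            ≤ (x ^ (4*α-4) + y ^ (4*α-4)) / 2 := by
          have e1 : (x ^ (2*α - 2)) ^ 2 = x ^ (4*α-4) := by
            rw [b2aux_rpow_sq h1', hx]; ring_nf
          have e2 : (y ^ (2*α - 2)) ^ 2 = y ^ (4*α-4) := by
            rw [b2aux_rpow_sq h2', hy]; ring_nf
          nlinarith [sq_nonneg (x ^ (2*α - 2) - y ^ (2*α - 2))]
        have h2pos : (0:ℝ) ≤ (2:ℝ) ^ (2*(s+α)) := Real.rpow_nonneg (by norm_num) _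
        calc wt (s+α) k * (x ^ (-(1+s)) * y ^ (-(1+s))) ^ 2
            = wt (s+α) k * (x ^ (-(2+2*s)) * y ^ (-(2+2*s))) := by rw [hfsq]
        _ ≤ ((2:ℝ) ^ (2*(s+α)) * (x ^ (2*(s+α)) * y ^ (2*(s+α))))
              * (x ^ (-(2+2*s)) * y ^ (-(2+2*s))) := by
            apply mul_le_mul_of_nonneg_right hwtk
            positivity
        _ = (2:ℝ) ^ (2*(s+α)) * (x ^ (2*α - 2) * y ^ (2*α - 2)) := by
            rw [← hcomb, ← hcomb']; ring
        _ ≤ (2:ℝ) ^ (2*(s+α)) * ((x ^ (4*α-4) + y ^ (4*α-4)) / 2) :=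
            mul_le_mul_of_nonneg_left hamgm h2pos
      · rw [hfdef]; dsimp only; rw [if_neg h]
        have : (0:ℝ) ^ 2 = 0 := by norm_num
        rw [this, mul_zero]
        positivity
    -- summability of the majorant
    have hUsum : Summable (fun k1 : ℤ =>
        (2:ℝ) ^ (2*(s+α)) * ((|(k1:ℝ)| ^ (4*α-4) + |((k - k1 : ℤ):ℝ)| ^ (4*α-4)) / 2)) := by
      have h2 : Summable (fun k1 : ℤ => |((k - k1 : ℤ):ℝ)| ^ (4*α-4)) := by
        have := (Equiv.subLeft k).summable_iff
          (f := fun n : ℤ => |(n:ℝ)| ^ (4*α-4))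
        exact this.mpr hZsum
      exact (((hZsum.add h2).div_const 2).mul_left _)
    have htsU : ∑' k1 : ℤ,
        (2:ℝ) ^ (2*(s+α)) * ((|(k1:ℝ)| ^ (4*α-4) + |((k - k1 : ℤ):ℝ)| ^ (4*α-4)) / 2) = Cs := by
      have h2 : Summable (fun k1 : ℤ => |((k - k1 : ℤ):ℝ)| ^ (4*α-4)) := by
        have := (Equiv.subLeft k).summable_iff (f := fun n : ℤ => |(n:ℝ)| ^ (4*α-4))
        exact this.mpr hZsum
      have ht2 : ∑' k1 : ℤ, |((k - k1 : ℤ):ℝ)| ^ (4*α-4) = Z := by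
        exact (Equiv.subLeft k).tsum_eq (f := fun n : ℤ => |(n:ℝ)| ^ (4*α-4))
      rw [tsum_mul_left, tsum_div_const, Summable.tsum_add hZsum h2, ht2, ← hZdef, hCsdef]
      ring
    have hwf : Summable (fun k1 : ℤ => wt (s+α) k * f k1 ^ 2) :=
      Summable.of_nonneg_of_le
        (fun k1 => mul_nonneg (hwt0 _ _) (sq_nonneg _))
        hf2 hUsum
    have hwtpos : 0 < wt (s+α) k := by
      rw [b2aux_wt_eq]; exact Real.rpow_pos_of_pos (b2aux_abs_pos hk) _
    have hf2sum : Summable (fun k1 : ℤ => f k1 ^ 2) := by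
      have h' := hwf.mul_left (wt (s+α) k)⁻¹
      refine h'.congr fun k1 => ?_
      rw [← mul_assoc, inv_mul_cancel₀ (ne_of_gt hwtpos), one_mul]
    have hwfle : wt (s+α) k * ∑' k1 : ℤ, f k1 ^ 2 ≤ Cs := by
      rw [← tsum_mul_left]
      calc ∑' k1 : ℤ, wt (s+α) k * f k1 ^ 2
          ≤ ∑' k1 : ℤ, (2:ℝ) ^ (2*(s+α)) *
            ((|(k1:ℝ)| ^ (4*α-4) + |((k - k1 : ℤ):ℝ)| ^ (4*α-4)) / 2) :=
            Summable.tsum_le_tsum hf2 hwf hUsum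
      _ = Cs := htsU
    -- summability of `g²` and its comparison
    have hg2 : ∀ k1 : ℤ, g k1 ^ 2 ≤ a k1 ^ 2 * b (k - k1) ^ 2 := by
      intro k1
      simp only [hgdef]
      split
      · rw [mul_pow]
      · simpa using mul_nonneg (sq_nonneg (a k1)) (sq_nonneg (b (k - k1)))
    have hg2sum : Summable (fun k1 : ℤ => g k1 ^ 2) :=
      Summable.of_nonneg_of_le (fun k1 => sq_nonneg _) hg2 (hfiber k)
    have hgle : ∑' k1 : ℤ, g k1 ^ 2 ≤ ∑' k1 : ℤ, a k1 ^ 2 * b (k - k1) ^ 2 :=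
      Summable.tsum_le_tsum hg2 hg2sum (hfiber k)
    -- summability of `f * g` (the norms of the summands)
    have hfgsum : Summable (fun k1 : ℤ => f k1 * g k1) := by
      refine Summable.of_nonneg_of_le (fun k1 => mul_nonneg (hf0 k1) (hg0 k1))
        (fun k1 => ?_) ((hf2sum.add hg2sum).div_const 2)
      nlinarith [sq_nonneg (f k1 - g k1)]
    -- norm bound on `B2`
    have hB2le : ‖B2 t φ ψ k‖ ≤ (1/6) * ∑' k1 : ℤ, f k1 * g k1 := by
      rw [B2]
      rw [norm_mul]
      have h16 : ‖(1/6 : ℂ)‖ = 1/6 := by norm_num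
      rw [h16]
      apply mul_le_mul_of_nonneg_left _ (by norm_num : (0:ℝ) ≤ 1/6)
      have hsum' : Summable (fun k1 : ℤ =>
          ‖(if k1 ≠ 0 ∧ k - k1 ≠ 0 then
            osc2 t k k1 * φ k1 * ψ (k - k1) / ((k1 : ℂ) * ((k - k1 : ℤ) : ℂ)) else 0)‖) :=
        hfgsum.congr fun k1 => (hFnorm k1).symm
      calc ‖∑' k1 : ℤ, (if k1 ≠ 0 ∧ k - k1 ≠ 0 then
            osc2 t k k1 * φ k1 * ψ (k - k1) / ((k1 : ℂ) * ((k - k1 : ℤ) : ℂ)) else 0)‖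
          ≤ ∑' k1 : ℤ, ‖(if k1 ≠ 0 ∧ k - k1 ≠ 0 then
            osc2 t k k1 * φ k1 * ψ (k - k1) / ((k1 : ℂ) * ((k - k1 : ℤ) : ℂ)) else 0)‖ :=
            norm_tsum_le_tsum_norm hsum'
      _ = ∑' k1 : ℤ, f k1 * g k1 := tsum_congr hFnorm
    -- put everything together
    have hfg0 : 0 ≤ ∑' k1 : ℤ, f k1 * g k1 :=
      tsum_nonneg fun k1 => mul_nonneg (hf0 k1) (hg0 k1)
    have hcs := b2aux_tsum_cs hf0 hg0 hf2sum hg2sum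
    have hg20 : 0 ≤ ∑' k1 : ℤ, g k1 ^ 2 := tsum_nonneg fun k1 => sq_nonneg _
    have hf20 : 0 ≤ ∑' k1 : ℤ, f k1 ^ 2 := tsum_nonneg fun k1 => sq_nonneg _
    calc wt (s+α) k * ‖B2 t φ ψ k‖ ^ 2
        ≤ wt (s+α) k * ((1/6) * ∑' k1 : ℤ, f k1 * g k1) ^ 2 := by
          apply mul_le_mul_of_nonneg_left _ hwtpos.le
          exact pow_le_pow_left₀ (norm_nonneg _) hB2le 2
    _ = (1/36) * (wt (s+α) k * (∑' k1 : ℤ, f k1 * g k1) ^ 2) := by ring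
    _ ≤ (1/36) * (wt (s+α) k * ((∑' k1 : ℤ, f k1 ^ 2) * (∑' k1 : ℤ, g k1 ^ 2))) := by
          apply mul_le_mul_of_nonneg_left _ (by norm_num : (0:ℝ) ≤ 1/36)
          exact mul_le_mul_of_nonneg_left hcs hwtpos.le
    _ = (1/36) * ((wt (s+α) k * ∑' k1 : ℤ, f k1 ^ 2) * (∑' k1 : ℤ, g k1 ^ 2)) := by ring
    _ ≤ (1/36) * (Cs * ∑' k1 : ℤ, a k1 ^ 2 * b (k - k1) ^ 2) := by
          apply mul_le_mul_of_nonneg_left _ (by norm_num : (0:ℝ) ≤ 1/36)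
          exact mul_le_mul hwfle hgle hg20 hCs0
    _ = Cs/36 * ∑' k1 : ℤ, a k1 ^ 2 * b (k - k1) ^ 2 := by ring
  -- assemble the global estimate
  have hT0 : ∀ k : ℤ, 0 ≤ wt (s+α) k * ‖B2 t φ ψ k‖ ^ 2 :=
    fun k => mul_nonneg (hwt0 _ _) (sq_nonneg _)
  have hD0 : ∀ k : ℤ, 0 ≤ Cs/36 * ∑' k1 : ℤ, a k1 ^ 2 * b (k - k1) ^ 2 :=
    fun k => mul_nonneg (by positivity)
      (tsum_nonneg fun k1 => mul_nonneg (sq_nonneg _) (sq_nonneg _))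
  have hind : ∀ k : ℤ, Set.indicator {k : ℤ | k ≠ 0}
      (fun k => wt (s+α) k * ‖B2 t φ ψ k‖ ^ 2) k
      ≤ Cs/36 * ∑' k1 : ℤ, a k1 ^ 2 * b (k - k1) ^ 2 := by
    intro k
    by_cases hk : k ≠ 0
    · rw [Set.indicator_apply, if_pos (show k ∈ {k : ℤ | k ≠ 0} from hk)]
      exact key k hk
    · rw [Set.indicator_apply, if_neg (show k ∉ {k : ℤ | k ≠ 0} from fun h => hk h)]
      exact hD0 k
  have hDsum' : Summable (fun k : ℤ => Cs/36 * ∑' k1 : ℤ, a k1 ^ 2 * b (k - k1) ^ 2) :=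
    hDsum.mul_left _
  have hindsum : Summable (Set.indicator {k : ℤ | k ≠ 0}
      fun k => wt (s+α) k * ‖B2 t φ ψ k‖ ^ 2) :=
    Summable.of_nonneg_of_le (fun k => Set.indicator_nonneg (fun k _ => hT0 k) k) hind hDsum'
  have hmem : memH (s+α) (B2 t φ ψ) := summable_subtype_iff_indicator.mpr hindsum
  refine ⟨hmem, ?_⟩
  have hts : ∑' k : {k : ℤ // k ≠ 0}, wt (s+α) k.1 * ‖B2 t φ ψ k.1‖ ^ 2
      ≤ Cs/36 * (hnorm s φ ^ 2 * hnorm s ψ ^ 2) := by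
    calc ∑' k : {k : ℤ // k ≠ 0}, wt (s+α) k.1 * ‖B2 t φ ψ k.1‖ ^ 2
        = ∑' k : ℤ, Set.indicator {k : ℤ | k ≠ 0}
            (fun k => wt (s+α) k * ‖B2 t φ ψ k‖ ^ 2) k := by
          rw [← tsum_subtype]; rfl
    _ ≤ ∑' k : ℤ, Cs/36 * ∑' k1 : ℤ, a k1 ^ 2 * b (k - k1) ^ 2 :=
        Summable.tsum_le_tsum hind hindsum hDsum'
    _ = Cs/36 * ∑' k : ℤ, ∑' k1 : ℤ, a k1 ^ 2 * b (k - k1) ^ 2 := tsum_mul_left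
    _ = Cs/36 * ((∑' k : ℤ, a k ^ 2) * (∑' k : ℤ, b k ^ 2)) := by rw [htsD]
    _ = Cs/36 * (hnorm s φ ^ 2 * hnorm s ψ ^ 2) := by rw [htsa, htsb]
  have hnphi : 0 ≤ hnorm s φ := Real.sqrt_nonneg _
  have hnpsi : 0 ≤ hnorm s ψ := Real.sqrt_nonneg _
  have hrhs : Cs/36 * (hnorm s φ ^ 2 * hnorm s ψ ^ 2)
      = (Real.sqrt Cs / 6 * hnorm s φ * hnorm s ψ) ^ 2 := by
    rw [mul_pow, mul_pow, div_pow, Real.sq_sqrt hCs0]; ring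
  rw [hnorm]
  calc Real.sqrt (∑' k : {k : ℤ // k ≠ 0}, wt (s+α) k.1 * ‖B2 t φ ψ k.1‖ ^ 2)
      ≤ Real.sqrt (Cs/36 * (hnorm s φ ^ 2 * hnorm s ψ ^ 2)) := Real.sqrt_le_sqrt hts
  _ = Real.sqrt Cs / 6 * hnorm s φ * hnorm s ψ := by
      rw [hrhs, Real.sqrt_sq (by positivity)]
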